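/- Under the same hypotheses as the robustness theorem for the matrix projector-splitting integrator (F Lipschitz with constant L and bounded by B, non-tangential part of F bounded by ε near the exact solution, initial value A(t0) of rank r), suppose that in each of the three substeps of every time step the substep differential equation is not solved exactly but replaced by an approximation whose local error is bounded by h·η. Then the resulting perturbed iterates Ỹ_n satisfy ‖Ỹ_n − A(t_n)‖ ≤ c1 h + c2 ε + c3 η for all n with t_n = t0 + nh ≤ T, where the constants c1, c2, c3 depend only on L, B and T − t0. -/

import Mathlib

open Matrix Set

namespace MatrixPSInexact

/-- Frobenius norm of a real matrix. -/
noncomputable def mfrob {α β : Type*} [Fintype α] [Fintype β] (A : Matrix α β ℝ) : ℝ :=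
  Real.sqrt (∑ a, ∑ b, A a b ^ 2)

attribute [local instance] Matrix.frobeniusSeminormedAddCommGroup
  Matrix.frobeniusNormedAddCommGroup Matrix.frobeniusNormedSpace

variable {m n p q r : ℕ}

lemma mfrob_eq_norm (A : Matrix (Fin m) (Fin n) ℝ) : mfrob A = ‖A‖ := by
  rw [Matrix.frobenius_norm_def, mfrob, Real.sqrt_eq_rpow]
  congr 1
  refine Finset.sum_congr rfl fun a _ => Finset.sum_congr rfl fun b _ => ?_
  rw [Real.norm_eq_abs, Real.rpow_two, sq_abs]

lemma mfrob_nonneg (A : Matrix (Fin m) (Fin n) ℝ) : 0 ≤ mfrob A := Real.sqrt_nonneg _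

lemma mfrob_zero : mfrob (0 : Matrix (Fin m) (Fin n) ℝ) = 0 := by
  rw [mfrob_eq_norm]; exact norm_zero

lemma mfrob_neg (A : Matrix (Fin m) (Fin n) ℝ) : mfrob (-A) = mfrob A := by
  rw [mfrob_eq_norm, mfrob_eq_norm]; exact norm_neg _

lemma mfrob_add_le (A B : Matrix (Fin m) (Fin n) ℝ) : mfrob (A + B) ≤ mfrob A + mfrob B := by
  simp only [mfrob_eq_norm]; exact norm_add_le _ _

lemma mfrob_sub_rev (A B : Matrix (Fin m) (Fin n) ℝ) : mfrob (A - B) = mfrob (B - A) := by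
  simp only [mfrob_eq_norm]; exact norm_sub_rev _ _

lemma norm_le_sum_abs (A : Matrix (Fin m) (Fin n) ℝ) : ‖A‖ ≤ ∑ i, ∑ j, |A i j| := by
  rw [← mfrob_eq_norm, mfrob]
  rw [show (∑ i, ∑ j, A i j ^ 2) = ∑ p : Fin m × Fin n, A p.1 p.2 ^ 2 from
    (Fintype.sum_prod_type (f := fun p : Fin m × Fin n => A p.1 p.2 ^ 2)).symm]
  rw [show (∑ i, ∑ j, |A i j|) = ∑ p : Fin m × Fin n, |A p.1 p.2| from
    (Fintype.sum_prod_type (f := fun p : Fin m × Fin n => |A p.1 p.2|)).symm]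
  calc Real.sqrt (∑ p : Fin m × Fin n, A p.1 p.2 ^ 2)
      ≤ Real.sqrt ((∑ p : Fin m × Fin n, |A p.1 p.2|) ^ 2) := by
        apply Real.sqrt_le_sqrt
        have := Finset.sum_sq_le_sq_sum_of_nonneg
          (s := (Finset.univ : Finset (Fin m × Fin n)))
          (f := fun p : Fin m × Fin n => |A p.1 p.2|) (fun i _ => abs_nonneg _)
        simpa [sq_abs] using this
    _ = ∑ p : Fin m × Fin n, |A p.1 p.2| :=
        Real.sqrt_sq (Finset.sum_nonneg fun _ _ => abs_nonneg _)

lemma hasDerivWithinAt_matrix {f : ℝ → Matrix (Fin m) (Fin n) ℝ}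
    {f' : Matrix (Fin m) (Fin n) ℝ} {s : Set ℝ} {x : ℝ}
    (h : ∀ i j, HasDerivWithinAt (fun t => f t i j) (f' i j) s x) :
    HasDerivWithinAt f f' s x := by
  refine hasDerivWithinAt_iff_isLittleO.mpr ?_
  have H : ∀ i j, (fun t => f t i j - f x i j - (t - x) * f' i j)
      =o[nhdsWithin x s] (fun t => t - x) := by
    intro i j
    simpa using hasDerivWithinAt_iff_isLittleO.mp (h i j)
  have Hsum : (fun t => ∑ i, ∑ j, |f t i j - f x i j - (t - x) * f' i j|)
      =o[nhdsWithin x s] (fun t => t - x) := by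
    refine Asymptotics.IsLittleO.fun_sum fun i _ => Asymptotics.IsLittleO.fun_sum fun j _ => ?_
    exact (H i j).abs_left
  refine Asymptotics.IsBigO.trans_isLittleO ?_ Hsum
  refine Asymptotics.isBigO_of_le _ fun t => ?_
  have h1 : ‖f t - f x - (t - x) • f'‖ ≤ ∑ i, ∑ j, |f t i j - f x i j - (t - x) * f' i j| := by
    have := norm_le_sum_abs (f t - f x - (t - x) • f')
    simpa [Matrix.sub_apply, Matrix.smul_apply, smul_eq_mul] using this
  refine h1.trans ?_
  rw [Real.norm_eq_abs]
  exact le_abs_self _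

lemma mvt {f f' : ℝ → Matrix (Fin m) (Fin n) ℝ} {a b C : ℝ}
    (hf : ∀ t ∈ Icc a b, ∀ i j, HasDerivWithinAt (fun s => f s i j) (f' t i j) (Icc a b) t)
    (hC : ∀ t ∈ Icc a b, mfrob (f' t) ≤ C)
    {x y : ℝ} (hx : x ∈ Icc a b) (hy : y ∈ Icc a b) (hxy : x ≤ y) :
    mfrob (f y - f x) ≤ C * (y - x) := by
  rw [mfrob_eq_norm]
  have := Convex.norm_image_sub_le_of_norm_hasDerivWithin_le
    (f := f) (f' := f') (s := Icc a b) (C := C)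
    (fun t ht => hasDerivWithinAt_matrix (hf t ht))
    (fun t ht => by rw [← mfrob_eq_norm]; exact hC t ht)
    (convex_Icc a b) hx hy
  calc ‖f y - f x‖ ≤ C * ‖y - x‖ := this
    _ = C * (y - x) := by rw [Real.norm_eq_abs, abs_of_nonneg (sub_nonneg.2 hxy)]

lemma mfrob_eq_trace (X : Matrix (Fin m) (Fin n) ℝ) :
    mfrob X = Real.sqrt (Matrix.trace (Xᵀ * X)) := by
  have h : Matrix.trace (Xᵀ * X) = ∑ i, ∑ j, X i j * X i j := by
    rw [Matrix.trace]
    simp only [Matrix.diag, Matrix.mul_apply, Matrix.transpose_apply]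
    rw [Finset.sum_comm]
  rw [mfrob, h]
  congr 1
  exact Finset.sum_congr rfl fun i _ => Finset.sum_congr rfl fun j _ => sq (X i j)

lemma trace_transpose_mul_self_nonneg (X : Matrix (Fin m) (Fin n) ℝ) :
    0 ≤ Matrix.trace (Xᵀ * X) := by
  rw [Matrix.trace]
  refine Finset.sum_nonneg fun j _ => ?_
  simp only [Matrix.diag, Matrix.mul_apply, Matrix.transpose_apply]
  exact Finset.sum_nonneg fun i _ => mul_self_nonneg _

lemma mfrob_transpose (X : Matrix (Fin m) (Fin n) ℝ) : mfrob Xᵀ = mfrob X := by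
  rw [mfrob, mfrob]
  congr 1
  rw [Finset.sum_comm]
  simp only [Matrix.transpose_apply]

lemma mfrob_orth_mul (U : Matrix (Fin m) (Fin r) ℝ) (hU : Uᵀ * U = 1)
    (X : Matrix (Fin r) (Fin n) ℝ) : mfrob (U * X) = mfrob X := by
  rw [mfrob_eq_trace, mfrob_eq_trace]
  congr 1
  rw [Matrix.transpose_mul, show Xᵀ * Uᵀ * (U * X) = Xᵀ * (Uᵀ * U) * X by
    simp only [Matrix.mul_assoc], hU, Matrix.mul_one]

lemma mfrob_mul_orthT (V : Matrix (Fin n) (Fin r) ℝ) (hV : Vᵀ * V = 1)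
    (X : Matrix (Fin m) (Fin r) ℝ) : mfrob (X * Vᵀ) = mfrob X := by
  rw [mfrob_eq_trace, mfrob_eq_trace]
  congr 1
  rw [Matrix.transpose_mul, Matrix.transpose_transpose]
  rw [show V * Xᵀ * (X * Vᵀ) = V * (Xᵀ * X * Vᵀ) by simp only [Matrix.mul_assoc]]
  rw [Matrix.trace_mul_comm, Matrix.mul_assoc, hV, Matrix.mul_one]

lemma trace_split (V : Matrix (Fin n) (Fin r) ℝ) (hV : Vᵀ * V = 1)
    (X : Matrix (Fin m) (Fin n) ℝ) :
    Matrix.trace (Xᵀ * X) = Matrix.trace ((X * V)ᵀ * (X * V))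
      + Matrix.trace ((X * (1 - V * Vᵀ))ᵀ * (X * (1 - V * Vᵀ))) := by
  have h1 : Matrix.trace ((X * V)ᵀ * (X * V)) = Matrix.trace (Xᵀ * X * (V * Vᵀ)) := by
    rw [Matrix.transpose_mul]
    rw [show Vᵀ * Xᵀ * (X * V) = Vᵀ * (Xᵀ * X * V) by simp only [Matrix.mul_assoc]]
    rw [Matrix.trace_mul_comm, Matrix.mul_assoc]
  have hVVproj : V * Vᵀ * (V * Vᵀ) = V * Vᵀ := by
    rw [show V * Vᵀ * (V * Vᵀ) = V * (Vᵀ * V) * Vᵀ by simp only [Matrix.mul_assoc], hV,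
      Matrix.mul_one]
  have hVV : (1 - V * Vᵀ) * (1 - V * Vᵀ) = 1 - V * Vᵀ := by
    simp only [Matrix.sub_mul, Matrix.mul_sub, Matrix.one_mul, Matrix.mul_one, hVVproj]
    abel
  have hsymm : (1 - V * Vᵀ)ᵀ = 1 - V * Vᵀ := by
    rw [Matrix.transpose_sub, Matrix.transpose_one, Matrix.transpose_mul,
      Matrix.transpose_transpose]
  have h2 : Matrix.trace ((X * (1 - V * Vᵀ))ᵀ * (X * (1 - V * Vᵀ)))
      = Matrix.trace (Xᵀ * X) - Matrix.trace (Xᵀ * X * (V * Vᵀ)) := by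
    rw [Matrix.transpose_mul, hsymm]
    rw [show (1 - V * Vᵀ) * Xᵀ * (X * (1 - V * Vᵀ)) = (1 - V * Vᵀ) * (Xᵀ * X * (1 - V * Vᵀ)) by
      simp only [Matrix.mul_assoc]]
    rw [Matrix.trace_mul_comm, Matrix.mul_assoc, hVV, Matrix.mul_sub, Matrix.mul_one,
      Matrix.trace_sub]
  rw [h1, h2]; ring

lemma mfrob_mul_orth_le (V : Matrix (Fin n) (Fin r) ℝ) (hV : Vᵀ * V = 1)
    (X : Matrix (Fin m) (Fin n) ℝ) : mfrob (X * V) ≤ mfrob X := by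
  rw [mfrob_eq_trace, mfrob_eq_trace]
  apply Real.sqrt_le_sqrt
  have := trace_split V hV X
  have hnn := trace_transpose_mul_self_nonneg (X * (1 - V * Vᵀ))
  linarith

lemma mfrob_mul_proj_le (V : Matrix (Fin n) (Fin r) ℝ) (hV : Vᵀ * V = 1)
    (X : Matrix (Fin m) (Fin n) ℝ) : mfrob (X * (1 - V * Vᵀ)) ≤ mfrob X := by
  rw [mfrob_eq_trace (X * (1 - V * Vᵀ)), mfrob_eq_trace X]
  apply Real.sqrt_le_sqrt
  have := trace_split V hV X
  have hnn := trace_transpose_mul_self_nonneg (X * V)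
  linarith

lemma mfrob_orthT_mul_le (U : Matrix (Fin m) (Fin r) ℝ) (hU : Uᵀ * U = 1)
    (X : Matrix (Fin m) (Fin n) ℝ) : mfrob (Uᵀ * X) ≤ mfrob X := by
  rw [← mfrob_transpose (Uᵀ * X), Matrix.transpose_mul, Matrix.transpose_transpose,
    ← mfrob_transpose X]
  exact mfrob_mul_orth_le U hU Xᵀ

lemma mfrob_proj_mul_le (U : Matrix (Fin m) (Fin r) ℝ) (hU : Uᵀ * U = 1)
    (X : Matrix (Fin m) (Fin n) ℝ) : mfrob ((1 - U * Uᵀ) * X) ≤ mfrob X := by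
  rw [← mfrob_transpose ((1 - U * Uᵀ) * X), Matrix.transpose_mul, ← mfrob_transpose X]
  rw [show (1 - U * Uᵀ)ᵀ = 1 - U * Uᵀ by
    rw [Matrix.transpose_sub, Matrix.transpose_one, Matrix.transpose_mul,
      Matrix.transpose_transpose]]
  exact mfrob_mul_proj_le U hU Xᵀ

lemma mfrob_one : mfrob (1 : Matrix (Fin r) (Fin r) ℝ) = Real.sqrt r := by
  rw [mfrob]
  congr 1
  have h : ∀ i : Fin r, ∑ j, ((1 : Matrix (Fin r) (Fin r) ℝ) i j) ^ 2 = 1 := by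
    intro i
    rw [Finset.sum_eq_single i]
    · simp [Matrix.one_apply]
    · intro b _ hb; simp [Matrix.one_apply, Ne.symm hb]
    · simp
  simp [h]

lemma mfrob_smul (c : ℝ) (X : Matrix (Fin m) (Fin n) ℝ) : mfrob (c • X) = |c| * mfrob X := by
  rw [mfrob, mfrob]
  have h : (∑ i, ∑ j, (c • X) i j ^ 2) = c ^ 2 * ∑ i, ∑ j, X i j ^ 2 := by
    simp [Matrix.smul_apply, smul_eq_mul, mul_pow, Finset.mul_sum]
  rw [h, Real.sqrt_mul (sq_nonneg c), Real.sqrt_sq_eq_abs]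

/-- invertible matrices close to any matrix -/
lemma exists_isUnit_near (S : Matrix (Fin r) (Fin r) ℝ) {θ : ℝ} (hθ : 0 < θ) :
    ∃ c : ℝ, 0 < c ∧ c < θ ∧ IsUnit (S + c • 1) := by
  have hpne : (Matrix.charpoly (-S)) ≠ 0 := (Matrix.charpoly_monic (-S)).ne_zero
  have hfin : {x : ℝ | Polynomial.IsRoot (Matrix.charpoly (-S)) x}.Finite :=
    Polynomial.finite_setOf_isRoot hpne
  have hIoo : (Ioo (0:ℝ) θ).Infinite := Set.Ioo_infinite hθ
  obtain ⟨c, hc⟩ := (hIoo.diff hfin).nonempty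
  refine ⟨c, hc.1.1, hc.1.2, ?_⟩
  have heval : (Matrix.charpoly (-S)).eval c = Matrix.det (c • (1 : Matrix (Fin r) (Fin r) ℝ) + S) := by
    rw [Matrix.charpoly, _root_.eval_det, Matrix.matPolyEquiv_charmatrix]
    congr 1
    simp only [Polynomial.eval_sub, Polynomial.eval_X, Polynomial.eval_C, sub_neg_eq_add]
    congr 1
    ext i j
    simp [Matrix.scalar, Matrix.smul_apply, Matrix.one_apply, Matrix.diagonal_apply]
  have hroot : (Matrix.charpoly (-S)).eval c ≠ 0 := hc.2
  rw [heval] at hroot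
  rw [show S + c • (1 : Matrix (Fin r) (Fin r) ℝ) = c • 1 + S from add_comm _ _]
  rw [Matrix.isUnit_iff_isUnit_det]
  exact isUnit_iff_ne_zero.mpr hroot

/-- Extension of the ε-bound to non-invertible S, by density of invertible matrices. -/
lemma eps_ext {n1 n2 r : ℕ} (F : Matrix (Fin n1) (Fin n2) ℝ → Matrix (Fin n1) (Fin n2) ℝ)
    (L ε : ℝ) (hL : 0 ≤ L)
    (hLip : ∀ Y Y', mfrob (F Y - F Y') ≤ L * mfrob (Y - Y'))
    (hε : ∀ (U : Matrix (Fin n1) (Fin r) ℝ) (S : Matrix (Fin r) (Fin r) ℝ)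
      (V : Matrix (Fin n2) (Fin r) ℝ), Uᵀ * U = 1 → Vᵀ * V = 1 → IsUnit S →
      mfrob ((1 - U * Uᵀ) * F (U * S * Vᵀ) * (1 - V * Vᵀ)) ≤ ε)
    (U : Matrix (Fin n1) (Fin r) ℝ) (S : Matrix (Fin r) (Fin r) ℝ)
    (V : Matrix (Fin n2) (Fin r) ℝ) (hU : Uᵀ * U = 1) (hV : Vᵀ * V = 1) :
    mfrob ((1 - U * Uᵀ) * F (U * S * Vᵀ) * (1 - V * Vᵀ)) ≤ ε := by
  refine le_of_forall_pos_le_add fun θ hθ => ?_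
  have hθ' : 0 < θ / (L * Real.sqrt r + 1) := by
    apply div_pos hθ
    have : 0 ≤ L * Real.sqrt r := mul_nonneg hL (Real.sqrt_nonneg _)
    linarith
  obtain ⟨c, hc0, hcθ, hcu⟩ := exists_isUnit_near S hθ'
  set S' := S + c • (1 : Matrix (Fin r) (Fin r) ℝ) with hS'
  have key : (1 - U * Uᵀ) * F (U * S * Vᵀ) * (1 - V * Vᵀ)
      = (1 - U * Uᵀ) * F (U * S' * Vᵀ) * (1 - V * Vᵀ)
        + (1 - U * Uᵀ) * (F (U * S * Vᵀ) - F (U * S' * Vᵀ)) * (1 - V * Vᵀ) := by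
    simp only [Matrix.sub_mul, Matrix.mul_sub, Matrix.one_mul, Matrix.mul_one]
    abel
  rw [key]
  have h1 : mfrob ((1 - U * Uᵀ) * F (U * S' * Vᵀ) * (1 - V * Vᵀ)) ≤ ε := hε U S' V hU hV hcu
  have h2 : mfrob ((1 - U * Uᵀ) * (F (U * S * Vᵀ) - F (U * S' * Vᵀ)) * (1 - V * Vᵀ)) ≤ θ := by
    have ha : mfrob ((1 - U * Uᵀ) * (F (U * S * Vᵀ) - F (U * S' * Vᵀ)) * (1 - V * Vᵀ))
        ≤ mfrob (F (U * S * Vᵀ) - F (U * S' * Vᵀ)) :=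
      le_trans (mfrob_mul_proj_le V hV _) (mfrob_proj_mul_le U hU _)
    have hb : mfrob (F (U * S * Vᵀ) - F (U * S' * Vᵀ)) ≤ L * mfrob (U * S * Vᵀ - U * S' * Vᵀ) :=
      hLip _ _
    have hc : U * S * Vᵀ - U * S' * Vᵀ = -(U * (c • (1 : Matrix (Fin r) (Fin r) ℝ)) * Vᵀ) := by
      rw [hS', Matrix.mul_add, Matrix.add_mul]
      abel
    have hd : mfrob (U * S * Vᵀ - U * S' * Vᵀ) = c * Real.sqrt r := by
      rw [hc, mfrob_neg, mfrob_mul_orthT V hV, mfrob_orth_mul U hU, mfrob_smul, mfrob_one,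
        abs_of_pos hc0]
    have he : L * (c * Real.sqrt r) ≤ θ := by
      have h5 : c * (L * Real.sqrt r + 1) ≤ θ / (L * Real.sqrt r + 1) * (L * Real.sqrt r + 1) := by
        apply mul_le_mul_of_nonneg_right (le_of_lt hcθ)
        have : 0 ≤ L * Real.sqrt r := mul_nonneg hL (Real.sqrt_nonneg _)
        linarith
      rw [div_mul_cancel₀] at h5
      · nlinarith [mul_nonneg hL (Real.sqrt_nonneg (r:ℝ))]
      · have : 0 ≤ L * Real.sqrt r := mul_nonneg hL (Real.sqrt_nonneg _)
        linarith
    calc mfrob _ ≤ L * mfrob (U * S * Vᵀ - U * S' * Vᵀ) := le_trans ha hb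
      _ = L * (c * Real.sqrt r) := by rw [hd]
      _ ≤ θ := he
  calc mfrob (_ + _) ≤ mfrob _ + mfrob _ := mfrob_add_le _ _
    _ ≤ ε + θ := add_le_add h1 h2

/-- entrywise derivative of `t ↦ A t * Q` -/
lemma hasDeriv_entry_mul_const {m n q : ℕ} {A : ℝ → Matrix (Fin m) (Fin n) ℝ}
    {A' : Matrix (Fin m) (Fin n) ℝ} {s : Set ℝ} {x : ℝ}
    (h : ∀ i j, HasDerivWithinAt (fun t => A t i j) (A' i j) s x)
    (Q : Matrix (Fin n) (Fin q) ℝ) :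
    ∀ i j, HasDerivWithinAt (fun t => (A t * Q) i j) ((A' * Q) i j) s x := by
  intro i j
  simp only [Matrix.mul_apply]
  exact HasDerivWithinAt.fun_sum fun l _ => (h i l).mul_const (Q l j)

/-- entrywise derivative of `t ↦ P * A t` -/
lemma hasDeriv_entry_const_mul {m n p : ℕ} {A : ℝ → Matrix (Fin m) (Fin n) ℝ}
    {A' : Matrix (Fin m) (Fin n) ℝ} {s : Set ℝ} {x : ℝ}
    (h : ∀ i j, HasDerivWithinAt (fun t => A t i j) (A' i j) s x)
    (P : Matrix (Fin p) (Fin m) ℝ) :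
    ∀ i j, HasDerivWithinAt (fun t => (P * A t) i j) ((P * A') i j) s x := by
  intro i j
  simp only [Matrix.mul_apply]
  exact HasDerivWithinAt.fun_sum fun l _ => (h l j).const_mul (P i l)

lemma mfrob_sub_le {m n : ℕ} (X Y : Matrix (Fin m) (Fin n) ℝ) :
    mfrob (X - Y) ≤ mfrob X + mfrob Y := by
  rw [sub_eq_add_neg]
  exact (mfrob_add_le _ _).trans (by rw [mfrob_neg])

lemma mfrob_add3_le {m n : ℕ} (X Y Z : Matrix (Fin m) (Fin n) ℝ) :
    mfrob (X + Y + Z) ≤ mfrob X + mfrob Y + mfrob Z :=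
  (mfrob_add_le _ _).trans (add_le_add (mfrob_add_le X Y) le_rfl)

/-- One step of the matrix projector-splitting integrator from `t0` to `t1` with
*inexact* substeps: in each of the K-, S- and L-substeps the exact solution of the
substep differential equation (with the computed initial value) is replaced by an
approximation whose local error is at most `δ` (`= h·η`) in the Frobenius norm. -/
noncomputable def MatStepInexact {n1 n2 r : ℕ}
    (F : ℝ → Matrix (Fin n1) (Fin n2) ℝ → Matrix (Fin n1) (Fin n2) ℝ)
    (t0 t1 δ : ℝ)
    (U0 : Matrix (Fin n1) (Fin r) ℝ) (S0 : Matrix (Fin r) (Fin r) ℝ)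
    (V0 : Matrix (Fin n2) (Fin r) ℝ)
    (U1 : Matrix (Fin n1) (Fin r) ℝ) (S1 : Matrix (Fin r) (Fin r) ℝ)
    (V1 : Matrix (Fin n2) (Fin r) ℝ) : Prop :=
  ∃ (K : ℝ → Matrix (Fin n1) (Fin r) ℝ) (Shat : Matrix (Fin r) (Fin r) ℝ)
    (S : ℝ → Matrix (Fin r) (Fin r) ℝ) (Stil : Matrix (Fin r) (Fin r) ℝ)
    (Lf : ℝ → Matrix (Fin n2) (Fin r) ℝ),
    -- K-step: exact solution `K`, computed end value `U1 Ŝ1` with local error ≤ δ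
    K t0 = U0 * S0 ∧
    (∀ t ∈ Icc t0 t1, ∀ a b, HasDerivWithinAt (fun s => K s a b)
      ((F t (K t * V0ᵀ) * V0) a b) (Icc t0 t1) t) ∧
    mfrob (U1 * Shat - K t1) ≤ δ ∧ U1ᵀ * U1 = 1 ∧
    -- S-step: exact solution `S` starting from `Ŝ1`, computed end value `S̃` with error ≤ δ
    S t0 = Shat ∧
    (∀ t ∈ Icc t0 t1, ∀ a b, HasDerivWithinAt (fun s => S s a b)
      ((-(U1ᵀ * F t (U1 * S t * V0ᵀ) * V0)) a b) (Icc t0 t1) t) ∧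
    mfrob (Stil - S t1) ≤ δ ∧
    -- L-step: exact solution `Lf` starting from `V0 S̃ᵀ`, computed end value `V1 S1ᵀ`
    -- with local error ≤ δ
    Lf t0 = V0 * Stilᵀ ∧
    (∀ t ∈ Icc t0 t1, ∀ a b, HasDerivWithinAt (fun s => Lf s a b)
      (((U1ᵀ * F t (U1 * (Lf t)ᵀ))ᵀ) a b) (Icc t0 t1) t) ∧
    mfrob (V1 * S1ᵀ - Lf t1) ≤ δ ∧ V1ᵀ * V1 = 1

set_option maxHeartbeats 1600000 in
lemma step_est {n1 n2 r : ℕ}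
    (F : ℝ → Matrix (Fin n1) (Fin n2) ℝ → Matrix (Fin n1) (Fin n2) ℝ)
    (A : ℝ → Matrix (Fin n1) (Fin n2) ℝ)
    (L B ε η h a b : ℝ) (hL : 0 ≤ L) (hB : 0 ≤ B) (hη : 0 ≤ η) (hh : 0 ≤ h)
    (hab : b = a + h)
    (hFlip : ∀ t ∈ Icc a b, ∀ Y Y', mfrob (F t Y - F t Y') ≤ L * mfrob (Y - Y'))
    (hFB : ∀ t ∈ Icc a b, ∀ Y, mfrob (F t Y) ≤ B)
    (hA : ∀ t ∈ Icc a b, ∀ i j, HasDerivWithinAt (fun s => A s i j) (F t (A t) i j) (Icc a b) t)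
    (hεx : ∀ t ∈ Icc a b, ∀ (U : Matrix (Fin n1) (Fin r) ℝ) (S : Matrix (Fin r) (Fin r) ℝ)
      (V : Matrix (Fin n2) (Fin r) ℝ), Uᵀ * U = 1 → Vᵀ * V = 1 →
      mfrob ((1 - U * Uᵀ) * F t (U * S * Vᵀ) * (1 - V * Vᵀ)) ≤ ε)
    (U0 : Matrix (Fin n1) (Fin r) ℝ) (S0 : Matrix (Fin r) (Fin r) ℝ)
    (V0 : Matrix (Fin n2) (Fin r) ℝ)
    (U1 : Matrix (Fin n1) (Fin r) ℝ) (S1 : Matrix (Fin r) (Fin r) ℝ)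
    (V1 : Matrix (Fin n2) (Fin r) ℝ)
    (hV0 : V0ᵀ * V0 = 1)
    (hstep : MatStepInexact F a b (h * η) U0 S0 V0 U1 S1 V1) :
    mfrob (U1 * S1 * V1ᵀ - A b) ≤ (1 + 4 * L * h) * mfrob (U0 * S0 * V0ᵀ - A a)
      + h * ε + 3 * (h * η) + 24 * (L * B * h ^ 2) + 8 * (L * h ^ 2 * η) := by
  obtain ⟨K, Shat, S, Stil, Lf, hK0, hKd, hEK, hU1, hS0, hSd, hES, hL0, hLd, hEL, hV1⟩ := hstep
  have hmema : a ∈ Icc a b := ⟨le_refl a, by rw [hab]; linarith⟩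
  have hmemb : b ∈ Icc a b := ⟨by rw [hab]; linarith, le_refl b⟩
  have hba : b - a = h := by rw [hab]; ring
  set e := mfrob (U0 * S0 * V0ᵀ - A a) with he
  have he0 : 0 ≤ e := mfrob_nonneg _
  -- A moves at most B h
  have hAmv : ∀ x ∈ Icc a b, ∀ y ∈ Icc a b, x ≤ y → mfrob (A y - A x) ≤ B * h := by
    intro x hx y hy hxy
    calc mfrob (A y - A x) ≤ B * (y - x) :=
          mvt (f := A) (f' := fun t => F t (A t)) hA (fun t ht => hFB t ht (A t)) hx hy hxy
      _ ≤ B * h := by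
          apply mul_le_mul_of_nonneg_left _ hB
          rw [← hba]; exact sub_le_sub hy.2 hx.1
  -- K moves at most B h
  have hKC : ∀ t ∈ Icc a b, mfrob (F t (K t * V0ᵀ) * V0) ≤ B :=
    fun t ht => (mfrob_mul_orth_le V0 hV0 _).trans (hFB t ht _)
  have hKmv : ∀ t ∈ Icc a b, mfrob (K t - K a) ≤ B * h := by
    intro t ht
    calc mfrob (K t - K a) ≤ B * (t - a) :=
          mvt (f := K) (f' := fun t => F t (K t * V0ᵀ) * V0) hKd hKC hmema ht ht.1
      _ ≤ B * h := by
          apply mul_le_mul_of_nonneg_left _ hB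
          rw [← hba]; exact sub_le_sub ht.2 (le_refl a)
  -- K V0ᵀ stays close to A
  have hKV : ∀ t ∈ Icc a b, mfrob (K t * V0ᵀ - A t) ≤ e + 2 * (B * h) := by
    intro t ht
    have hid : K t * V0ᵀ - A t
        = (K t - K a) * V0ᵀ + (U0 * S0 * V0ᵀ - A a) + (A a - A t) := by
      rw [hK0]
      simp only [Matrix.sub_mul]
      abel
    rw [hid]
    have h3 := mfrob_add3_le ((K t - K a) * V0ᵀ) (U0 * S0 * V0ᵀ - A a) (A a - A t)
    have h4 : mfrob ((K t - K a) * V0ᵀ) ≤ B * h := by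
      rw [mfrob_mul_orthT V0 hV0]; exact hKmv t ht
    have h5 : mfrob (A a - A t) ≤ B * h := by
      rw [mfrob_sub_rev]; exact hAmv a hmema t ht ht.1
    calc mfrob _ ≤ _ := h3
      _ ≤ B * h + e + (B * h) := add_le_add (add_le_add h4 (le_refl e)) h5
      _ = e + 2 * (B * h) := by ring
  -- remainder of the K-step
  have hRK : mfrob (K b - K a - (A b - A a) * V0) ≤ L * (e + 2 * (B * h)) * h := by
    have hmvt := mvt (f := fun t => K t - A t * V0) (C := L * (e + 2 * (B * h)))
      (f' := fun t => F t (K t * V0ᵀ) * V0 - F t (A t) * V0)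
      (fun t ht i j => by
        simp only [Matrix.sub_apply]
        exact (hKd t ht i j).sub (hasDeriv_entry_mul_const (hA t ht) V0 i j))
      (fun t ht => by
        show mfrob (F t (K t * V0ᵀ) * V0 - F t (A t) * V0) ≤ _
        rw [show F t (K t * V0ᵀ) * V0 - F t (A t) * V0 = (F t (K t * V0ᵀ) - F t (A t)) * V0 from
          (Matrix.sub_mul _ _ _).symm]
        calc mfrob ((F t (K t * V0ᵀ) - F t (A t)) * V0)
            ≤ mfrob (F t (K t * V0ᵀ) - F t (A t)) := mfrob_mul_orth_le V0 hV0 _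
          _ ≤ L * mfrob (K t * V0ᵀ - A t) := hFlip t ht _ _
          _ ≤ L * (e + 2 * (B * h)) :=
              mul_le_mul_of_nonneg_left (hKV t ht) hL)
      hmema hmemb (by rw [hab]; linarith)
    have hid : (K b - A b * V0) - (K a - A a * V0) = K b - K a - (A b - A a) * V0 := by
      simp only [Matrix.sub_mul]
      abel
    rw [hid] at hmvt
    rw [hba] at hmvt
    exact hmvt
  -- U1 Shat V0ᵀ stays close to A
  have hUSh : ∀ t ∈ Icc a b, mfrob (U1 * Shat * V0ᵀ - A t) ≤ e + 3 * (B * h) + h * η := by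
    intro t ht
    have hid : U1 * Shat * V0ᵀ - A t
        = (U1 * Shat - K b) * V0ᵀ + (K b * V0ᵀ - A b) + (A b - A t) := by
      simp only [Matrix.sub_mul]
      abel
    rw [hid]
    have h3 := mfrob_add3_le ((U1 * Shat - K b) * V0ᵀ) (K b * V0ᵀ - A b) (A b - A t)
    have h4 : mfrob ((U1 * Shat - K b) * V0ᵀ) ≤ h * η := by
      rw [mfrob_mul_orthT V0 hV0]; exact hEK
    have h5 : mfrob (A b - A t) ≤ B * h := hAmv t ht b hmemb ht.2
    calc mfrob _ ≤ _ := h3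
      _ ≤ h * η + (e + 2 * (B * h)) + B * h :=
          add_le_add (add_le_add h4 (hKV b hmemb)) h5
      _ = e + 3 * (B * h) + h * η := by ring
  -- S moves at most B h
  have hSC : ∀ t ∈ Icc a b, mfrob (-(U1ᵀ * F t (U1 * S t * V0ᵀ) * V0)) ≤ B := by
    intro t ht
    rw [mfrob_neg]
    calc mfrob (U1ᵀ * F t (U1 * S t * V0ᵀ) * V0)
        ≤ mfrob (U1ᵀ * F t (U1 * S t * V0ᵀ)) := mfrob_mul_orth_le V0 hV0 _
      _ ≤ mfrob (F t (U1 * S t * V0ᵀ)) := mfrob_orthT_mul_le U1 hU1 _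
      _ ≤ B := hFB t ht _
  have hSmv : ∀ t ∈ Icc a b, mfrob (S t - Shat) ≤ B * h := by
    intro t ht
    rw [← hS0]
    calc mfrob (S t - S a) ≤ B * (t - a) :=
          mvt (f := S) (f' := fun t => -(U1ᵀ * F t (U1 * S t * V0ᵀ) * V0)) hSd hSC hmema ht ht.1
      _ ≤ B * h := by
          apply mul_le_mul_of_nonneg_left _ hB
          rw [← hba]; exact sub_le_sub ht.2 (le_refl a)
  -- U1 S(t) V0ᵀ stays close to A
  have hSV : ∀ t ∈ Icc a b, mfrob (U1 * S t * V0ᵀ - A t) ≤ e + 4 * (B * h) + h * η := by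
    intro t ht
    have hid : U1 * S t * V0ᵀ - A t
        = U1 * (S t - Shat) * V0ᵀ + (U1 * Shat * V0ᵀ - A t) := by
      simp only [Matrix.mul_sub, Matrix.sub_mul]
      abel
    rw [hid]
    have h4 : mfrob (U1 * (S t - Shat) * V0ᵀ) ≤ B * h := by
      rw [mfrob_mul_orthT V0 hV0, mfrob_orth_mul U1 hU1]; exact hSmv t ht
    calc mfrob _ ≤ _ := mfrob_add_le _ _
      _ ≤ B * h + (e + 3 * (B * h) + h * η) := add_le_add h4 (hUSh t ht)
      _ = e + 4 * (B * h) + h * η := by ring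
  -- remainder of the S-step
  have hRS : mfrob (S b - Shat + U1ᵀ * (A b - A a) * V0)
      ≤ L * (e + 4 * (B * h) + h * η) * h := by
    have hmvt := mvt (f := fun t => S t + U1ᵀ * A t * V0) (C := L * (e + 4 * (B * h) + h * η))
      (f' := fun t => -(U1ᵀ * F t (U1 * S t * V0ᵀ) * V0) + U1ᵀ * F t (A t) * V0)
      (fun t ht i j => by
        simp only [Matrix.add_apply]
        exact (hSd t ht i j).add
          (hasDeriv_entry_mul_const (hasDeriv_entry_const_mul (hA t ht) U1ᵀ) V0 i j))
      (fun t ht => by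
        have hrw : -(U1ᵀ * F t (U1 * S t * V0ᵀ) * V0) + U1ᵀ * F t (A t) * V0
            = U1ᵀ * (F t (A t) - F t (U1 * S t * V0ᵀ)) * V0 := by
          simp only [Matrix.mul_sub, Matrix.sub_mul]
          abel
        show mfrob (-(U1ᵀ * F t (U1 * S t * V0ᵀ) * V0) + U1ᵀ * F t (A t) * V0) ≤ _
        rw [hrw]
        calc mfrob (U1ᵀ * (F t (A t) - F t (U1 * S t * V0ᵀ)) * V0)
            ≤ mfrob (U1ᵀ * (F t (A t) - F t (U1 * S t * V0ᵀ))) := mfrob_mul_orth_le V0 hV0 _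
          _ ≤ mfrob (F t (A t) - F t (U1 * S t * V0ᵀ)) := mfrob_orthT_mul_le U1 hU1 _
          _ ≤ L * mfrob (A t - U1 * S t * V0ᵀ) := hFlip t ht _ _
          _ = L * mfrob (U1 * S t * V0ᵀ - A t) := by rw [mfrob_sub_rev]
          _ ≤ L * (e + 4 * (B * h) + h * η) :=
              mul_le_mul_of_nonneg_left (hSV t ht) hL)
      hmema hmemb (by rw [hab]; linarith)
    have hid : (S b + U1ᵀ * A b * V0) - (S a + U1ᵀ * A a * V0)
        = S b - Shat + U1ᵀ * (A b - A a) * V0 := by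
      rw [hS0]
      simp only [Matrix.mul_sub, Matrix.sub_mul]
      abel
    rw [hid, hba] at hmvt
    exact hmvt
  -- U1 Stil V0ᵀ stays close to A
  have hStilV : ∀ t ∈ Icc a b, mfrob (U1 * Stil * V0ᵀ - A t)
      ≤ e + 5 * (B * h) + 2 * (h * η) := by
    intro t ht
    have hid : U1 * Stil * V0ᵀ - A t
        = U1 * (Stil - S b) * V0ᵀ + (U1 * S b * V0ᵀ - A b) + (A b - A t) := by
      simp only [Matrix.mul_sub, Matrix.sub_mul]
      abel
    rw [hid]
    have h3 := mfrob_add3_le (U1 * (Stil - S b) * V0ᵀ) (U1 * S b * V0ᵀ - A b) (A b - A t)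
    have h4 : mfrob (U1 * (Stil - S b) * V0ᵀ) ≤ h * η := by
      rw [mfrob_mul_orthT V0 hV0, mfrob_orth_mul U1 hU1]; exact hES
    have h5 : mfrob (A b - A t) ≤ B * h := hAmv t ht b hmemb ht.2
    calc mfrob _ ≤ _ := h3
      _ ≤ h * η + (e + 4 * (B * h) + h * η) + B * h :=
          add_le_add (add_le_add h4 (hSV b hmemb)) h5
      _ = e + 5 * (B * h) + 2 * (h * η) := by ring
  -- Lf moves at most B h
  have hLC : ∀ t ∈ Icc a b, mfrob ((U1ᵀ * F t (U1 * (Lf t)ᵀ))ᵀ) ≤ B := by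
    intro t ht
    rw [mfrob_transpose]
    calc mfrob (U1ᵀ * F t (U1 * (Lf t)ᵀ))
        ≤ mfrob (F t (U1 * (Lf t)ᵀ)) := mfrob_orthT_mul_le U1 hU1 _
      _ ≤ B := hFB t ht _
  have hLmv : ∀ t ∈ Icc a b, mfrob (Lf t - Lf a) ≤ B * h := by
    intro t ht
    calc mfrob (Lf t - Lf a) ≤ B * (t - a) :=
          mvt (f := Lf) (f' := fun t => (U1ᵀ * F t (U1 * (Lf t)ᵀ))ᵀ) hLd hLC hmema ht ht.1
      _ ≤ B * h := by
          apply mul_le_mul_of_nonneg_left _ hB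
          rw [← hba]; exact sub_le_sub ht.2 (le_refl a)
  -- U1 Lf(t)ᵀ stays close to A
  have hLV : ∀ t ∈ Icc a b, mfrob (U1 * (Lf t)ᵀ - A t)
      ≤ e + 6 * (B * h) + 2 * (h * η) := by
    intro t ht
    have hid : U1 * (Lf t)ᵀ - A t
        = U1 * (Lf t - Lf a)ᵀ + (U1 * Stil * V0ᵀ - A t) := by
      rw [hL0]
      simp only [Matrix.transpose_sub, Matrix.transpose_mul, Matrix.transpose_transpose,
        Matrix.mul_sub, Matrix.mul_assoc]
      abel
    rw [hid]
    have h4 : mfrob (U1 * (Lf t - Lf a)ᵀ) ≤ B * h := by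
      rw [mfrob_orth_mul U1 hU1, mfrob_transpose]; exact hLmv t ht
    calc mfrob _ ≤ _ := mfrob_add_le _ _
      _ ≤ B * h + (e + 5 * (B * h) + 2 * (h * η)) := add_le_add h4 (hStilV t ht)
      _ = e + 6 * (B * h) + 2 * (h * η) := by ring
  -- remainder of the L-step
  have hRL : mfrob ((Lf b)ᵀ - Stil * V0ᵀ - U1ᵀ * (A b - A a))
      ≤ L * (e + 6 * (B * h) + 2 * (h * η)) * h := by
    have hmvt := mvt (f := fun t => (Lf t)ᵀ - U1ᵀ * A t) (C := L * (e + 6 * (B * h) + 2 * (h * η)))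
      (f' := fun t => U1ᵀ * F t (U1 * (Lf t)ᵀ) - U1ᵀ * F t (A t))
      (fun t ht i j => by
        simp only [Matrix.sub_apply, Matrix.transpose_apply]
        have h1 := hLd t ht j i
        simp only [Matrix.transpose_apply] at h1
        exact h1.sub (hasDeriv_entry_const_mul (hA t ht) U1ᵀ i j))
      (fun t ht => by
        have hrw : U1ᵀ * F t (U1 * (Lf t)ᵀ) - U1ᵀ * F t (A t)
            = U1ᵀ * (F t (U1 * (Lf t)ᵀ) - F t (A t)) := (Matrix.mul_sub _ _ _).symm
        show mfrob (U1ᵀ * F t (U1 * (Lf t)ᵀ) - U1ᵀ * F t (A t)) ≤ _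
        rw [hrw]
        calc mfrob (U1ᵀ * (F t (U1 * (Lf t)ᵀ) - F t (A t)))
            ≤ mfrob (F t (U1 * (Lf t)ᵀ) - F t (A t)) := mfrob_orthT_mul_le U1 hU1 _
          _ ≤ L * mfrob (U1 * (Lf t)ᵀ - A t) := hFlip t ht _ _
          _ ≤ L * (e + 6 * (B * h) + 2 * (h * η)) :=
              mul_le_mul_of_nonneg_left (hLV t ht) hL)
      hmema hmemb (by rw [hab]; linarith)
    have hid : ((Lf b)ᵀ - U1ᵀ * A b) - ((Lf a)ᵀ - U1ᵀ * A a)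
        = (Lf b)ᵀ - Stil * V0ᵀ - U1ᵀ * (A b - A a) := by
      rw [hL0]
      simp only [Matrix.transpose_mul, Matrix.transpose_transpose, Matrix.mul_sub]
      abel
    rw [hid, hba] at hmvt
    exact hmvt
  -- the ε-term
  have hG4 : mfrob ((1 - U1 * U1ᵀ) * (A b - A a) * (1 - V0 * V0ᵀ))
      ≤ (ε + L * (e + 4 * (B * h) + h * η)) * h := by
    have hmvt := mvt (f := fun t => (1 - U1 * U1ᵀ) * A t * (1 - V0 * V0ᵀ))
      (C := ε + L * (e + 4 * (B * h) + h * η))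
      (f' := fun t => (1 - U1 * U1ᵀ) * F t (A t) * (1 - V0 * V0ᵀ))
      (fun t ht i j =>
        hasDeriv_entry_mul_const (hasDeriv_entry_const_mul (hA t ht) (1 - U1 * U1ᵀ))
          (1 - V0 * V0ᵀ) i j)
      (fun t ht => by
        have hrw : (1 - U1 * U1ᵀ) * F t (A t) * (1 - V0 * V0ᵀ)
            = (1 - U1 * U1ᵀ) * F t (U1 * S t * V0ᵀ) * (1 - V0 * V0ᵀ)
              + (1 - U1 * U1ᵀ) * (F t (A t) - F t (U1 * S t * V0ᵀ)) * (1 - V0 * V0ᵀ) := by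
          simp only [Matrix.mul_sub, Matrix.sub_mul, Matrix.one_mul, Matrix.mul_one]
          abel
        show mfrob ((1 - U1 * U1ᵀ) * F t (A t) * (1 - V0 * V0ᵀ)) ≤ _
        rw [hrw]
        have h1 := hεx t ht U1 (S t) V0 hU1 hV0
        have h2 : mfrob ((1 - U1 * U1ᵀ) * (F t (A t) - F t (U1 * S t * V0ᵀ)) * (1 - V0 * V0ᵀ))
            ≤ L * (e + 4 * (B * h) + h * η) := by
          calc mfrob _ ≤ mfrob ((1 - U1 * U1ᵀ) * (F t (A t) - F t (U1 * S t * V0ᵀ))) :=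
                mfrob_mul_proj_le V0 hV0 _
            _ ≤ mfrob (F t (A t) - F t (U1 * S t * V0ᵀ)) := mfrob_proj_mul_le U1 hU1 _
            _ ≤ L * mfrob (A t - U1 * S t * V0ᵀ) := hFlip t ht _ _
            _ = L * mfrob (U1 * S t * V0ᵀ - A t) := by rw [mfrob_sub_rev]
            _ ≤ L * (e + 4 * (B * h) + h * η) :=
                mul_le_mul_of_nonneg_left (hSV t ht) hL
        calc mfrob (_ + _) ≤ mfrob _ + mfrob _ := mfrob_add_le _ _
          _ ≤ ε + L * (e + 4 * (B * h) + h * η) := add_le_add h1 h2)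
      hmema hmemb (by rw [hab]; linarith)
    have hid : (1 - U1 * U1ᵀ) * A b * (1 - V0 * V0ᵀ) - (1 - U1 * U1ᵀ) * A a * (1 - V0 * V0ᵀ)
        = (1 - U1 * U1ᵀ) * (A b - A a) * (1 - V0 * V0ᵀ) := by
      simp only [Matrix.mul_sub, Matrix.sub_mul]
      abel
    rw [hid, hba] at hmvt
    exact hmvt
  -- assembly
  have hID : U1 * S1 * V1ᵀ - A b
      = (U0 * S0 * V0ᵀ - A a)
        - (1 - U1 * U1ᵀ) * (A b - A a) * (1 - V0 * V0ᵀ)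
        + (K b - K a - (A b - A a) * V0) * V0ᵀ
        + (U1 * Shat - K b) * V0ᵀ
        + U1 * (S b - Shat + U1ᵀ * (A b - A a) * V0) * V0ᵀ
        + U1 * (Stil - S b) * V0ᵀ
        + U1 * ((Lf b)ᵀ - Stil * V0ᵀ - U1ᵀ * (A b - A a))
        + U1 * (V1 * S1ᵀ - Lf b)ᵀ := by
    rw [hK0]
    simp only [Matrix.mul_sub, Matrix.sub_mul, Matrix.mul_add, Matrix.add_mul,
      Matrix.transpose_sub, Matrix.transpose_mul, Matrix.transpose_transpose,
      Matrix.mul_one, Matrix.one_mul, Matrix.mul_assoc]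
    abel
  rw [hID]
  have T1 : mfrob ((U0 * S0 * V0ᵀ - A a)
      - (1 - U1 * U1ᵀ) * (A b - A a) * (1 - V0 * V0ᵀ))
      ≤ e + (ε + L * (e + 4 * (B * h) + h * η)) * h :=
    (mfrob_sub_le _ _).trans (add_le_add (le_refl e) hG4)
  have T2 : mfrob ((K b - K a - (A b - A a) * V0) * V0ᵀ) ≤ L * (e + 2 * (B * h)) * h := by
    rw [mfrob_mul_orthT V0 hV0]; exact hRK
  have T3 : mfrob ((U1 * Shat - K b) * V0ᵀ) ≤ h * η := by
    rw [mfrob_mul_orthT V0 hV0]; exact hEK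
  have T4 : mfrob (U1 * (S b - Shat + U1ᵀ * (A b - A a) * V0) * V0ᵀ)
      ≤ L * (e + 4 * (B * h) + h * η) * h := by
    rw [mfrob_mul_orthT V0 hV0, mfrob_orth_mul U1 hU1]; exact hRS
  have T5 : mfrob (U1 * (Stil - S b) * V0ᵀ) ≤ h * η := by
    rw [mfrob_mul_orthT V0 hV0, mfrob_orth_mul U1 hU1]; exact hES
  have T6 : mfrob (U1 * ((Lf b)ᵀ - Stil * V0ᵀ - U1ᵀ * (A b - A a)))
      ≤ L * (e + 6 * (B * h) + 2 * (h * η)) * h := by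
    rw [mfrob_orth_mul U1 hU1]; exact hRL
  have T7 : mfrob (U1 * (V1 * S1ᵀ - Lf b)ᵀ) ≤ h * η := by
    rw [mfrob_orth_mul U1 hU1, mfrob_transpose]; exact hEL
  have tri : mfrob ((U0 * S0 * V0ᵀ - A a)
        - (1 - U1 * U1ᵀ) * (A b - A a) * (1 - V0 * V0ᵀ)
        + (K b - K a - (A b - A a) * V0) * V0ᵀ
        + (U1 * Shat - K b) * V0ᵀ
        + U1 * (S b - Shat + U1ᵀ * (A b - A a) * V0) * V0ᵀ
        + U1 * (Stil - S b) * V0ᵀ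
        + U1 * ((Lf b)ᵀ - Stil * V0ᵀ - U1ᵀ * (A b - A a))
        + U1 * (V1 * S1ᵀ - Lf b)ᵀ)
      ≤ (e + (ε + L * (e + 4 * (B * h) + h * η)) * h)
        + L * (e + 2 * (B * h)) * h + h * η + L * (e + 4 * (B * h) + h * η) * h + h * η
        + L * (e + 6 * (B * h) + 2 * (h * η)) * h + h * η := by
    refine (mfrob_add_le _ _).trans (add_le_add ?_ T7)
    refine (mfrob_add_le _ _).trans (add_le_add ?_ T6)
    refine (mfrob_add_le _ _).trans (add_le_add ?_ T5)
    refine (mfrob_add_le _ _).trans (add_le_add ?_ T4)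
    refine (mfrob_add_le _ _).trans (add_le_add ?_ T3)
    exact (mfrob_add_le _ _).trans (add_le_add T1 T2)
  refine tri.trans ?_
  nlinarith [mul_nonneg (mul_nonneg hL hB) (sq_nonneg h),
    mul_nonneg (mul_nonneg hL (sq_nonneg h)) hη,
    mul_nonneg hL hh, mul_nonneg hB hh, mul_nonneg hh hη, sq_nonneg h]

set_option maxHeartbeats 1600000 in
/-- **Robustness of the matrix projector-splitting integrator with inexact substeps.**
Under the hypotheses of the robustness theorem (F `L`-Lipschitz and bounded by `B`,
non-tangential part of `F` at rank-`r` matrices bounded by `ε`, initial value of rank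
`r`), if in each substep of every time step the substep differential equation is solved
with local error at most `h·η`, then the perturbed iterates `Ỹₙ` satisfy
`‖Ỹₙ - A(tₙ)‖ ≤ c₁ h + c₂ ε + c₃ η`, where `c₁, c₂, c₃` depend only on `L`, `B`
and `T - t0`. -/
theorem matrix_projector_splitting_robustness_inexact
    (L B Δ : ℝ) :
    ∃ c1 c2 c3 : ℝ, ∀ (t0 T : ℝ), T - t0 = Δ →
    ∀ (n1 n2 r : ℕ)
      (F : ℝ → Matrix (Fin n1) (Fin n2) ℝ → Matrix (Fin n1) (Fin n2) ℝ)
      (A : ℝ → Matrix (Fin n1) (Fin n2) ℝ),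
    (∀ (Y : Matrix (Fin n1) (Fin n2) ℝ) a b, ContinuousOn (fun t => F t Y a b) (Icc t0 T)) →
    (∀ t ∈ Icc t0 T, ∀ Y Y', mfrob (F t Y - F t Y') ≤ L * mfrob (Y - Y')) →
    (∀ t ∈ Icc t0 T, ∀ Y, mfrob (F t Y) ≤ B) →
    (∀ t ∈ Icc t0 T, ∀ a b, HasDerivWithinAt (fun s => A s a b) (F t (A t) a b) (Icc t0 T) t) →
    (A t0).rank = r →
    ∀ ε : ℝ, 0 ≤ ε →
    (∀ t ∈ Icc t0 T, ∀ (U : Matrix (Fin n1) (Fin r) ℝ) (S : Matrix (Fin r) (Fin r) ℝ)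
       (V : Matrix (Fin n2) (Fin r) ℝ), Uᵀ * U = 1 → Vᵀ * V = 1 → IsUnit S →
       mfrob ((1 - U * Uᵀ) * F t (U * S * Vᵀ) * (1 - V * Vᵀ)) ≤ ε) →
    ∀ η : ℝ, 0 ≤ η →
    ∀ h : ℝ, 0 < h →
    ∀ (Us : ℕ → Matrix (Fin n1) (Fin r) ℝ) (Ss : ℕ → Matrix (Fin r) (Fin r) ℝ)
      (Vs : ℕ → Matrix (Fin n2) (Fin r) ℝ),
    A t0 = Us 0 * Ss 0 * (Vs 0)ᵀ → (Us 0)ᵀ * Us 0 = 1 → (Vs 0)ᵀ * Vs 0 = 1 →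
    (∀ k : ℕ, t0 + (k + 1 : ℕ) * h ≤ T →
      MatStepInexact F (t0 + k * h) (t0 + (k + 1 : ℕ) * h) (h * η)
        (Us k) (Ss k) (Vs k) (Us (k + 1)) (Ss (k + 1)) (Vs (k + 1))) →
    ∀ N : ℕ, t0 + N * h ≤ T →
      mfrob (Us N * Ss N * (Vs N)ᵀ - A (t0 + N * h)) ≤ c1 * h + c2 * ε + c3 * η := by
  set L' := max L 0 with hL'def
  set B' := max B 0 with hB'def
  set Δ' := max Δ 0 with hΔ'def
  have hL' : (0:ℝ) ≤ L' := le_max_right _ _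
  have hB' : (0:ℝ) ≤ B' := le_max_right _ _
  have hΔ' : (0:ℝ) ≤ Δ' := le_max_right _ _
  set E := Real.exp (4 * L' * Δ') with hEdef
  have hE : (0:ℝ) ≤ E := (Real.exp_pos _).le
  refine ⟨E * (24 * (L' * B' * Δ')), E * Δ', E * (3 * Δ' + 8 * (L' * Δ' ^ 2)), ?_⟩
  intro t0 T hΔeq n1 n2 r F A hFc hFlip hFB hA hrank ε hε hεbound η hη h hh Us Ss Vs
    hY0 hU0orth hV0orth hsteps N hNT
  set G := h * ε + 3 * (h * η) + 24 * (L' * B' * h ^ 2) + 8 * (L' * h ^ 2 * η) with hGdef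
  have hG : 0 ≤ G := by
    have : (0:ℝ) ≤ L' * B' * h ^ 2 := by positivity
    have : (0:ℝ) ≤ L' * h ^ 2 * η := by positivity
    have : (0:ℝ) ≤ h * ε := by positivity
    have : (0:ℝ) ≤ h * η := by positivity
    rw [hGdef]; positivity
  have hx1 : (1:ℝ) ≤ 1 + 4 * L' * h := by nlinarith [hh.le]
  -- the induction
  have key : ∀ M : ℕ, t0 + M * h ≤ T →
      ((Vs M)ᵀ * Vs M = 1 ∧
        mfrob (Us M * Ss M * (Vs M)ᵀ - A (t0 + M * h))
          ≤ (M : ℝ) * (1 + 4 * L' * h) ^ M * G) := by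
    intro M
    induction M with
    | zero =>
      intro _
      refine ⟨hV0orth, ?_⟩
      simp only [Nat.cast_zero, zero_mul, add_zero, pow_zero]
      rw [hY0, sub_self, mfrob_zero]
    | succ M ih =>
      intro hle
      have hleM : t0 + (M:ℝ) * h ≤ T := by
        push_cast at hle ⊢
        nlinarith [hh.le]
      obtain ⟨hVM, hEM⟩ := ih hleM
      have hstep := hsteps M hle
      obtain ⟨K, Shat, S, Stil, Lf, h1, h2, h3, h4, h5, h6, h7, h8, h9, h10, h11⟩ := hstep
      have hab : t0 + ((M + 1 : ℕ) : ℝ) * h = (t0 + (M:ℝ) * h) + h := by push_cast; ring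
      have hsub : Icc (t0 + (M:ℝ) * h) (t0 + ((M + 1 : ℕ) : ℝ) * h) ⊆ Icc t0 T := by
        apply Icc_subset_Icc
        · nlinarith [hh.le, Nat.cast_nonneg (α := ℝ) M]
        · exact hle
      have hest := step_est F A L' B' ε η h (t0 + (M:ℝ) * h) (t0 + ((M + 1 : ℕ) : ℝ) * h)
        hL' hB' hη hh.le hab
        (fun t ht Y Y' => (hFlip t (hsub ht) Y Y').trans
          (mul_le_mul_of_nonneg_right (le_max_left L 0) (mfrob_nonneg _)))
        (fun t ht Y => (hFB t (hsub ht) Y).trans (le_max_left B 0))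
        (fun t ht i j => (hA t (hsub ht) i j).mono hsub)
        (fun t ht U S V hU hV => eps_ext (F t) L' ε hL'
          (fun Y Y' => (hFlip t (hsub ht) Y Y').trans
            (mul_le_mul_of_nonneg_right (le_max_left L 0) (mfrob_nonneg _)))
          (fun U S V hU hV hS => hεbound t (hsub ht) U S V hU hV hS) U S V hU hV)
        (Us M) (Ss M) (Vs M) (Us (M + 1)) (Ss (M + 1)) (Vs (M + 1)) hVM
        ⟨K, Shat, S, Stil, Lf, h1, h2, h3, h4, h5, h6, h7, h8, h9, h10, h11⟩
      refine ⟨h11, ?_⟩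
      have hpow1 : (1:ℝ) ≤ (1 + 4 * L' * h) ^ (M + 1) := one_le_pow₀ hx1
      have s1 : (1 + 4 * L' * h) * mfrob (Us M * Ss M * (Vs M)ᵀ - A (t0 + (M:ℝ) * h))
          ≤ (1 + 4 * L' * h) * ((M : ℝ) * (1 + 4 * L' * h) ^ M * G) :=
        mul_le_mul_of_nonneg_left hEM (by linarith)
      have s2 : (1 + 4 * L' * h) * ((M : ℝ) * (1 + 4 * L' * h) ^ M * G)
          = (M : ℝ) * (1 + 4 * L' * h) ^ (M + 1) * G := by
        rw [pow_succ]; ring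
      have s3 : G ≤ (1 + 4 * L' * h) ^ (M + 1) * G := le_mul_of_one_le_left hG hpow1
      calc mfrob (Us (M + 1) * Ss (M + 1) * (Vs (M + 1))ᵀ - A (t0 + ((M + 1 : ℕ) : ℝ) * h))
          ≤ (1 + 4 * L' * h) * mfrob (Us M * Ss M * (Vs M)ᵀ - A (t0 + (M:ℝ) * h))
            + h * ε + 3 * (h * η) + 24 * (L' * B' * h ^ 2) + 8 * (L' * h ^ 2 * η) := hest
        _ ≤ (M : ℝ) * (1 + 4 * L' * h) ^ (M + 1) * G + G := by
            rw [s2] at s1; linarith [hGdef.le, hGdef.ge]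
        _ ≤ (M : ℝ) * (1 + 4 * L' * h) ^ (M + 1) * G + (1 + 4 * L' * h) ^ (M + 1) * G := by
            linarith
        _ = ((M + 1 : ℕ) : ℝ) * (1 + 4 * L' * h) ^ (M + 1) * G := by push_cast; ring
  obtain ⟨-, hbound⟩ := key N hNT
  have hc1 : (0:ℝ) ≤ E * (24 * (L' * B' * Δ')) := by positivity
  have hc2 : (0:ℝ) ≤ E * Δ' := by positivity
  have hc3 : (0:ℝ) ≤ E * (3 * Δ' + 8 * (L' * Δ' ^ 2)) := by positivity
  rcases Nat.eq_zero_or_pos N with hN0 | hN1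
  · subst hN0
    have : mfrob (Us 0 * Ss 0 * (Vs 0)ᵀ - A (t0 + (0:ℕ) * h)) ≤ 0 := by
      simpa using hbound
    have hrhs : 0 ≤ E * (24 * (L' * B' * Δ')) * h + E * Δ' * ε
        + E * (3 * Δ' + 8 * (L' * Δ' ^ 2)) * η := by positivity
    calc mfrob _ ≤ 0 := this
      _ ≤ _ := hrhs
  · -- N ≥ 1
    have hN1' : (1:ℝ) ≤ (N:ℝ) := by exact_mod_cast hN1
    have hNh : (N:ℝ) * h ≤ Δ' := by
      have : (N:ℝ) * h ≤ T - t0 := by linarith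
      rw [hΔeq] at this
      exact this.trans (le_max_left _ _)
    have hhΔ : h ≤ Δ' := by nlinarith [hh.le]
    have hpowE : (1 + 4 * L' * h) ^ N ≤ E := by
      have e1 : 1 + 4 * L' * h ≤ Real.exp (4 * L' * h) := by
        have := Real.add_one_le_exp (4 * L' * h)
        linarith
      have e2 : (1 + 4 * L' * h) ^ N ≤ (Real.exp (4 * L' * h)) ^ N :=
        pow_le_pow_left₀ (by linarith) e1 N
      have e3 : (Real.exp (4 * L' * h)) ^ N = Real.exp ((N:ℝ) * (4 * L' * h)) :=
        (Real.exp_nat_mul _ N).symm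
      have e4 : Real.exp ((N:ℝ) * (4 * L' * h)) ≤ E := by
        rw [hEdef]
        apply Real.exp_le_exp.mpr
        nlinarith [hNh, hL']
      calc (1 + 4 * L' * h) ^ N ≤ (Real.exp (4 * L' * h)) ^ N := e2
        _ = Real.exp ((N:ℝ) * (4 * L' * h)) := e3
        _ ≤ E := e4
    have hNG : 0 ≤ (N:ℝ) * G := mul_nonneg (Nat.cast_nonneg N) hG
    have b2 : (N:ℝ) * (1 + 4 * L' * h) ^ N * G ≤ E * ((N:ℝ) * G) := by
      have : (N:ℝ) * (1 + 4 * L' * h) ^ N * G = ((N:ℝ) * G) * (1 + 4 * L' * h) ^ N := by ring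
      rw [this]
      calc ((N:ℝ) * G) * (1 + 4 * L' * h) ^ N ≤ ((N:ℝ) * G) * E :=
            mul_le_mul_of_nonneg_left hpowE hNG
        _ = E * ((N:ℝ) * G) := by ring
    have b3 : (N:ℝ) * G ≤ Δ' * ε + 3 * (Δ' * η) + 24 * (L' * B' * (Δ' * h))
        + 8 * (L' * (Δ' * Δ') * η) := by
      have t1 : (N:ℝ) * h * ε ≤ Δ' * ε := mul_le_mul_of_nonneg_right hNh hε
      have t2 : (N:ℝ) * h * η ≤ Δ' * η := mul_le_mul_of_nonneg_right hNh hη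
      have t3 : (N:ℝ) * h * h ≤ Δ' * h := mul_le_mul_of_nonneg_right hNh hh.le
      have t4 : L' * B' * ((N:ℝ) * h * h) ≤ L' * B' * (Δ' * h) :=
        mul_le_mul_of_nonneg_left t3 (mul_nonneg hL' hB')
      have t5 : L' * η * ((N:ℝ) * h * h) ≤ L' * η * (Δ' * h) :=
        mul_le_mul_of_nonneg_left t3 (mul_nonneg hL' hη)
      have t6 : Δ' * h ≤ Δ' * Δ' := mul_le_mul_of_nonneg_left hhΔ hΔ'
      have t7 : L' * η * (Δ' * h) ≤ L' * η * (Δ' * Δ') :=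
        mul_le_mul_of_nonneg_left t6 (mul_nonneg hL' hη)
      rw [hGdef]
      nlinarith [t1, t2, t4, t5, t7]
    calc mfrob (Us N * Ss N * (Vs N)ᵀ - A (t0 + N * h))
        ≤ (N:ℝ) * (1 + 4 * L' * h) ^ N * G := hbound
      _ ≤ E * ((N:ℝ) * G) := b2
      _ ≤ E * (Δ' * ε + 3 * (Δ' * η) + 24 * (L' * B' * (Δ' * h))
          + 8 * (L' * (Δ' * Δ') * η)) := mul_le_mul_of_nonneg_left b3 hE
      _ = E * (24 * (L' * B' * Δ')) * h + E * Δ' * ε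
          + E * (3 * Δ' + 8 * (L' * Δ' ^ 2)) * η := by ring

end MatrixPSInexact
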